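/- Let k ≥ 3 and n > k be integers, and set m = ⌈k/2⌉. If G is a complete k-partite graph on n vertices whose independence number is at most ⌈n/m⌉, then the number of edges of G is at least C(n,2)·(1 − 1/⌈k/2⌉). -/

import Mathlib

open Finset

theorem stmt5 {V : Type*} [Fintype V] [DecidableEq V] (G : SimpleGraph V) [DecidableRel G.Adj]
    (n k : ℕ) (hk : 3 ≤ k) (hn : k < n) (hcard : Fintype.card V = n)
    (p : V → Fin k) (hG : ∀ u v : V, G.Adj u v ↔ p u ≠ p v)
    (hind : ∀ I : Finset V, (∀ u ∈ I, ∀ v ∈ I, u ≠ v → ¬ G.Adj u v) →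
      I.card ≤ (n + (k + 1) / 2 - 1) / ((k + 1) / 2)) :
    ((n.choose 2 : ℚ)) * (1 - 1 / (((k + 1) / 2 : ℕ) : ℚ)) ≤ (G.edgeFinset.card : ℚ) := by
  classical
  set m := (k + 1) / 2 with hm
  set t := (n + m - 1) / m with ht
  have hm2 : 2 ≤ m := by omega
  -- fibers
  set N : Fin k → ℕ := fun i => (univ.filter fun v => p v = i).card with hN
  have hsum : ∑ i, N i = n := by
    rw [← hcard, ← Finset.card_eq_sum_card_fiberwise (fun x _ => mem_univ (p x))]
    exact card_univ
  -- each fiber is independent, so bounded by t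
  have hNle : ∀ i, N i ≤ t := by
    intro i
    apply hind
    intro u hu v hv huv
    simp only [mem_filter] at hu hv
    rw [hG]
    simp [hu.2, hv.2]
  -- complement degree
  have hdeg : ∀ v, Gᶜ.degree v = N (p v) - 1 := by
    intro v
    have : Gᶜ.neighborFinset v = (univ.filter fun u => p u = p v).erase v := by
      ext u
      simp only [SimpleGraph.mem_neighborFinset, SimpleGraph.compl_adj, hG, mem_erase,
        mem_filter, mem_univ, true_and, not_not]
      constructor
      · rintro ⟨h1, h2⟩; exact ⟨fun h => h1 (h ▸ rfl), h2.symm⟩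
      · rintro ⟨h1, h2⟩; exact ⟨Ne.symm h1, h2.symm⟩
    rw [SimpleGraph.degree, this, card_erase_of_mem (by simp)]
  -- twice the complement edges
  have hEc : 2 * Gᶜ.edgeFinset.card = ∑ i, N i * (N i - 1) := by
    rw [← SimpleGraph.sum_degrees_eq_twice_card_edges]
    rw [← Finset.sum_fiberwise (g := p) (s := univ) (f := fun v => Gᶜ.degree v)]
    congr 1
    ext i
    rw [Finset.sum_congr rfl (fun v hv => by
      simp only [mem_filter] at hv
      rw [hdeg, hv.2]), Finset.sum_const, smul_eq_mul]
  have hEcle : 2 * Gᶜ.edgeFinset.card ≤ n * (t - 1) := by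
    rw [hEc, ← hsum, Finset.sum_mul]
    apply Finset.sum_le_sum
    intro i _
    exact Nat.mul_le_mul_left _ (by have := hNle i; omega)
  -- edge count split
  have hsplit : G.edgeFinset.card + Gᶜ.edgeFinset.card = n.choose 2 := by
    have hdisj : Disjoint G.edgeFinset Gᶜ.edgeFinset := by
      rw [Finset.disjoint_left]
      intro e he he'
      rw [SimpleGraph.mem_edgeFinset] at he he'
      induction e with
      | h u v => exact he'.2 he
    have hunion : G.edgeFinset ∪ Gᶜ.edgeFinset = (⊤ : SimpleGraph V).edgeFinset := by
      ext e
      induction e with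
      | h u v =>
        simp only [mem_union, SimpleGraph.mem_edgeFinset, SimpleGraph.mem_edgeSet,
          SimpleGraph.compl_adj, SimpleGraph.top_adj]
        constructor
        · rintro (h | h)
          · exact h.ne
          · exact h.1
        · intro h
          by_cases hadj : G.Adj u v
          · exact Or.inl hadj
          · exact Or.inr ⟨h, hadj⟩
    calc G.edgeFinset.card + Gᶜ.edgeFinset.card
        = (G.edgeFinset ∪ Gᶜ.edgeFinset).card := (card_union_of_disjoint hdisj).symm
      _ = (⊤ : SimpleGraph V).edgeFinset.card := by rw [hunion]
      _ = (Fintype.card V).choose 2 := SimpleGraph.card_edgeFinset_top_eq_card_choose_two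
      _ = n.choose 2 := by rw [hcard]
  -- key arithmetic: m * (t - 1) ≤ n - 1
  have hkey : m * (t - 1) ≤ n - 1 := by
    have h1 : t * m ≤ n + m - 1 := Nat.div_mul_le_self _ _
    have ht1 : 1 ≤ t := Nat.one_le_div_iff (by omega) |>.mpr (by omega)
    have h3 : m * (t - 1) = m * t - m := by
      cases t with
      | zero => omega
      | succ s => simp [Nat.mul_succ]
    have h4 : m * t = t * m := mul_comm _ _
    omega
  -- move to ℚ
  have hmQ : (0 : ℚ) < (m : ℚ) := by exact_mod_cast (by omega : 0 < m)
  have hchoose : (n.choose 2 : ℚ) = n * (n - 1) / 2 := Nat.cast_choose_two (K := ℚ) n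
  have hEcQ : (Gᶜ.edgeFinset.card : ℚ) ≤ (n.choose 2 : ℚ) / m := by
    rw [hchoose]
    have h2 : (2 * Gᶜ.edgeFinset.card : ℚ) ≤ (n : ℚ) * ((t : ℚ) - 1) := by
      have := hEcle
      have ht1 : 1 ≤ t := by
        rw [ht]; exact Nat.one_le_div_iff (by omega) |>.mpr (by omega)
      have : (2 * Gᶜ.edgeFinset.card : ℚ) ≤ ((n * (t - 1) : ℕ) : ℚ) := by exact_mod_cast this
      calc (2 * Gᶜ.edgeFinset.card : ℚ) ≤ ((n * (t - 1) : ℕ) : ℚ) := this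
        _ = (n : ℚ) * ((t : ℚ) - 1) := by push_cast [Nat.cast_sub ht1]; ring
    have hkeyQ : (m : ℚ) * ((t : ℚ) - 1) ≤ (n : ℚ) - 1 := by
      have ht1 : 1 ≤ t := by
        rw [ht]; exact Nat.one_le_div_iff (by omega) |>.mpr (by omega)
      have : ((m * (t - 1) : ℕ) : ℚ) ≤ ((n - 1 : ℕ) : ℚ) := by exact_mod_cast hkey
      push_cast [Nat.cast_sub ht1, Nat.cast_sub (by omega : 1 ≤ n)] at this
      linarith
    rw [div_div, le_div_iff₀ (by positivity)]
    have hn0 : (0 : ℚ) ≤ (n : ℚ) := Nat.cast_nonneg n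
    nlinarith [mul_le_mul_of_nonneg_left hkeyQ hn0, mul_le_mul_of_nonneg_left h2 (le_of_lt hmQ)]
  have hsplitQ : (G.edgeFinset.card : ℚ) = (n.choose 2 : ℚ) - Gᶜ.edgeFinset.card := by
    have : (G.edgeFinset.card : ℚ) + Gᶜ.edgeFinset.card = n.choose 2 := by
      exact_mod_cast hsplit
    linarith
  rw [hsplitQ]
  have hc0 : (0 : ℚ) ≤ (n.choose 2 : ℚ) := Nat.cast_nonneg _
  have : (n.choose 2 : ℚ) * (1 - 1 / (m : ℚ)) = (n.choose 2 : ℚ) - (n.choose 2 : ℚ) / m := by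
    field_simp
  rw [this]
  linarith
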